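/- Suppose ker Λ_0 ⊆ ker P_1 or ker Λ_0 ⊆ ker Λ_1, suppose the joint-kernel condition [P_0 f_0 = 0, P_1(f_0 − f_1) = 0, Λ_0 f_0 = 0, Λ_1 f_1 = 0 imply f_0 = 0 and f_1 = 0] holds, and suppose the feasible set { (f_0,f_1) : ‖P_0 f_0‖ ≤ ε_0, ‖P_1(f_0 − f_1)‖ ≤ ε_1, Λ_0 f_0 = y_0, Λ_1 f_1 = y_1 } is nonempty. Let (b^y, c_0^y, c_1^y) with b^y, c_0^y, c_1^y ≥ 0 and c_0^y + c_1^y > 0 minimize c_0 (ε_0² − ‖u_0‖²) + c_1 (ε_1² − ‖u_1‖²) + b subject to: (1) c_0 ‖P_0 h_0‖² + c_1 ‖P_1(h_0 − h_1)‖² ≥ ‖Q h_0‖² for all h_0 ∈ N_0, h_1 ∈ N_1; and (2) c_0 ‖P_0 h_0‖² + c_1 ‖P_1(h_0 − h_1)‖² + 2t (c_0 ⟨P_0 h_0, u_0⟩ + c_1 ⟨P_1(h_0 − h_1), u_1⟩) + t² b ≥ 0 for all h_0 ∈ N_0, h_1 ∈ N_1, t ∈ ℝ. Set τ^y = c_1^y/(c_0^y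 + c_1^y). Then Q(f_0^{τ^y}) minimizes the local worst-case error: lwce_y(Q f_0^{τ^y}) ≤ lwce_y(z) for every z ∈ Z. -/

import Mathlib

open scoped ENNReal

set_option maxHeartbeats 1600000 in
/-- In the multi-fidelity Hilbert setting, under
`ker Λ₀ ⊆ ker P₁` or `ker Λ₀ ⊆ ker Λ₁`, the joint-kernel condition, and nonemptiness
of the feasible set, constrained regularization with the data-dependent parameter
`τ^y = c₁^y/(c₀^y + c₁^y)` obtained from the semidefinite program gives a locally
optimal recovery: `Q f₀^{τ^y}` minimizes the local worst-case error. -/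
theorem statement16
    {F Z G₀ G₁ : Type*}
    [NormedAddCommGroup F] [InnerProductSpace ℝ F] [FiniteDimensional ℝ F]
    [NormedAddCommGroup Z] [InnerProductSpace ℝ Z] [FiniteDimensional ℝ Z]
    [NormedAddCommGroup G₀] [InnerProductSpace ℝ G₀] [FiniteDimensional ℝ G₀]
    [NormedAddCommGroup G₁] [InnerProductSpace ℝ G₁] [FiniteDimensional ℝ G₁]
    {m₀ m₁ : ℕ}
    (P₀ : F →ₗ[ℝ] G₀) (P₁ : F →ₗ[ℝ] G₁) (Q : F →ₗ[ℝ] Z)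
    (Λ₀ : F →ₗ[ℝ] (Fin m₀ → ℝ)) (Λ₁ : F →ₗ[ℝ] (Fin m₁ → ℝ))
    (ε₀ ε₁ : ℝ) (hε₀ : 0 < ε₀) (hε₁ : 0 < ε₁)
    (hker : LinearMap.ker Λ₀ ≤ LinearMap.ker P₁ ∨
      LinearMap.ker Λ₀ ≤ LinearMap.ker Λ₁)
    (hjoint : ∀ f₀ f₁ : F, P₀ f₀ = 0 → P₁ (f₀ - f₁) = 0 → Λ₀ f₀ = 0 → Λ₁ f₁ = 0 →
      f₀ = 0 ∧ f₁ = 0)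
    (y₀ : Fin m₀ → ℝ) (y₁ : Fin m₁ → ℝ)
    (hfeas : {p : F × F | ‖P₀ p.1‖ ≤ ε₀ ∧ ‖P₁ (p.1 - p.2)‖ ≤ ε₁ ∧
      Λ₀ p.1 = y₀ ∧ Λ₁ p.2 = y₁}.Nonempty)
    -- minimal-norm solutions `w₀ = Λ₀†y₀` and `w₁ = Λ₁†y₁`
    (w₀ : F) (hw₀mem : w₀ ∈ (LinearMap.ker Λ₀)ᗮ) (hw₀ : Λ₀ w₀ = y₀)
    (w₁ : F) (hw₁mem : w₁ ∈ (LinearMap.ker Λ₁)ᗮ) (hw₁ : Λ₁ w₁ = y₁)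
    -- `(b, c₀, c₁)` solves the semidefinite program
    (b c₀ c₁ : ℝ) (hb : 0 ≤ b) (hc₀ : 0 ≤ c₀) (hc₁ : 0 ≤ c₁) (hcpos : 0 < c₀ + c₁)
    (hsdp1 : ∀ h₀ ∈ LinearMap.ker Λ₀, ∀ h₁ ∈ LinearMap.ker Λ₁,
      ‖Q h₀‖ ^ 2 ≤ c₀ * ‖P₀ h₀‖ ^ 2 + c₁ * ‖P₁ (h₀ - h₁)‖ ^ 2)
    (hsdp2 : ∀ h₀ ∈ LinearMap.ker Λ₀, ∀ h₁ ∈ LinearMap.ker Λ₁, ∀ t : ℝ,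
      0 ≤ c₀ * ‖P₀ h₀‖ ^ 2 + c₁ * ‖P₁ (h₀ - h₁)‖ ^ 2 +
        2 * t * (c₀ * (inner ℝ (P₀ h₀) (P₀ w₀) : ℝ) +
          c₁ * (inner ℝ (P₁ (h₀ - h₁)) (P₁ (w₀ - w₁)) : ℝ)) + t ^ 2 * b)
    (hmin : ∀ b' c₀' c₁' : ℝ, 0 ≤ b' → 0 ≤ c₀' → 0 ≤ c₁' →
      (∀ h₀ ∈ LinearMap.ker Λ₀, ∀ h₁ ∈ LinearMap.ker Λ₁,
        ‖Q h₀‖ ^ 2 ≤ c₀' * ‖P₀ h₀‖ ^ 2 + c₁' * ‖P₁ (h₀ - h₁)‖ ^ 2) →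
      (∀ h₀ ∈ LinearMap.ker Λ₀, ∀ h₁ ∈ LinearMap.ker Λ₁, ∀ t : ℝ,
        0 ≤ c₀' * ‖P₀ h₀‖ ^ 2 + c₁' * ‖P₁ (h₀ - h₁)‖ ^ 2 +
          2 * t * (c₀' * (inner ℝ (P₀ h₀) (P₀ w₀) : ℝ) +
            c₁' * (inner ℝ (P₁ (h₀ - h₁)) (P₁ (w₀ - w₁)) : ℝ)) + t ^ 2 * b') →
      c₀ * (ε₀ ^ 2 - ‖P₀ w₀‖ ^ 2) + c₁ * (ε₁ ^ 2 - ‖P₁ (w₀ - w₁)‖ ^ 2) + b ≤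
        c₀' * (ε₀ ^ 2 - ‖P₀ w₀‖ ^ 2) + c₁' * (ε₁ ^ 2 - ‖P₁ (w₀ - w₁)‖ ^ 2) + b')
    -- the constrained regularizer with parameter `τ^y = c₁/(c₀+c₁)`
    (f₀τ f₁τ : F) (hf₀τ : Λ₀ f₀τ = y₀) (hf₁τ : Λ₁ f₁τ = y₁)
    (hτmin : ∀ g₀ g₁ : F, Λ₀ g₀ = y₀ → Λ₁ g₁ = y₁ →
      (1 - c₁ / (c₀ + c₁)) * ‖P₀ f₀τ‖ ^ 2 +
          (c₁ / (c₀ + c₁)) * ‖P₁ (f₀τ - f₁τ)‖ ^ 2 ≤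
        (1 - c₁ / (c₀ + c₁)) * ‖P₀ g₀‖ ^ 2 +
          (c₁ / (c₀ + c₁)) * ‖P₁ (g₀ - g₁)‖ ^ 2) :
    ∀ z : Z,
      (⨆ p ∈ {p : F × F | ‖P₀ p.1‖ ≤ ε₀ ∧ ‖P₁ (p.1 - p.2)‖ ≤ ε₁ ∧
          Λ₀ p.1 = y₀ ∧ Λ₁ p.2 = y₁},
        ENNReal.ofReal ‖Q p.1 - Q f₀τ‖) ≤
      ⨆ p ∈ {p : F × F | ‖P₀ p.1‖ ≤ ε₀ ∧ ‖P₁ (p.1 - p.2)‖ ≤ ε₁ ∧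
          Λ₀ p.1 = y₀ ∧ Λ₁ p.2 = y₁},
        ENNReal.ofReal ‖Q p.1 - z‖ := by
  intro z
  have haux : ∀ h₀ ∈ LinearMap.ker Λ₀, ∃ a', Λ₁ a' = 0 ∧ P₁ (h₀ - a') = 0 := by
    intro h₀ hh₀
    rcases hker with hk | hk
    · exact ⟨0, map_zero _, by simpa using hk hh₀⟩
    · exact ⟨h₀, hk hh₀, by simp⟩
  by_cases hc0 : c₀ = 0
  · -- degenerate case: Q vanishes on ker Λ₀
    have hQ : ∀ h₀ ∈ LinearMap.ker Λ₀, Q h₀ = 0 := by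
      intro h₀ hh₀
      obtain ⟨a', ha', hP⟩ := haux h₀ hh₀
      have h1 := hsdp1 h₀ hh₀ a' (LinearMap.mem_ker.mpr ha')
      rw [hP, hc0] at h1
      simp only [norm_zero, zero_mul, mul_zero, add_zero, zero_add] at h1
      have h2 : ‖Q h₀‖ ^ 2 = 0 := le_antisymm (by nlinarith) (sq_nonneg _)
      exact norm_eq_zero.mp (pow_eq_zero_iff two_ne_zero |>.mp h2)
    refine iSup₂_le fun p hp => ?_
    obtain ⟨hp0, hp1, hpΛ0, hpΛ1⟩ := hp
    have hmem : p.1 - f₀τ ∈ LinearMap.ker Λ₀ := by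
      rw [LinearMap.mem_ker, map_sub, hpΛ0, hf₀τ, sub_self]
    have : Q p.1 - Q f₀τ = Q (p.1 - f₀τ) := (map_sub Q _ _).symm
    rw [this, hQ _ hmem]
    simp
  · have hc0' : 0 < c₀ := lt_of_le_of_ne hc₀ (Ne.symm hc0)
    -- orthogonality relation from the regularization minimality
    have horth : ∀ h₀ ∈ LinearMap.ker Λ₀, (inner ℝ (P₀ f₀τ) (P₀ h₀) : ℝ) = 0 := by
      intro h₀ hh₀
      obtain ⟨a', ha', hP⟩ := haux h₀ hh₀
      have h1τ : 0 < 1 - c₁ / (c₀ + c₁) := by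
        have : c₁ / (c₀ + c₁) < 1 := by
          rw [div_lt_one hcpos]; linarith
        linarith
      have key : ∀ t : ℝ, 0 ≤ ‖P₀ h₀‖ ^ 2 * t ^ 2 +
          (2 * (inner ℝ (P₀ f₀τ) (P₀ h₀) : ℝ)) * t + 0 := by
        intro t
        have hΛg₀ : Λ₀ (f₀τ + t • h₀) = y₀ := by
          rw [map_add, map_smul, LinearMap.mem_ker.mp hh₀, smul_zero, add_zero, hf₀τ]
        have hΛg₁ : Λ₁ (f₁τ + t • a') = y₁ := by
          rw [map_add, map_smul, ha', smul_zero, add_zero, hf₁τ]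
        have hm := hτmin (f₀τ + t • h₀) (f₁τ + t • a') hΛg₀ hΛg₁
        have hP1 : P₁ (f₀τ + t • h₀ - (f₁τ + t • a')) = P₁ (f₀τ - f₁τ) := by
          have e : f₀τ + t • h₀ - (f₁τ + t • a') = (f₀τ - f₁τ) + t • (h₀ - a') := by
            module
          rw [e, map_add, map_smul, hP, smul_zero, add_zero]
        rw [hP1] at hm
        have hsq : ‖P₀ f₀τ‖ ^ 2 ≤ ‖P₀ (f₀τ + t • h₀)‖ ^ 2 := by nlinarith [hm, h1τ]
        have hexp : ‖P₀ (f₀τ + t • h₀)‖ ^ 2 = ‖P₀ f₀τ‖ ^ 2 +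
            2 * t * (inner ℝ (P₀ f₀τ) (P₀ h₀) : ℝ) + t ^ 2 * ‖P₀ h₀‖ ^ 2 := by
          rw [map_add, map_smul, norm_add_sq_real, real_inner_smul_right, norm_smul]
          rw [mul_pow, Real.norm_eq_abs, sq_abs]
          ring
        nlinarith [hsq, hexp]
      set l := (inner ℝ (P₀ f₀τ) (P₀ h₀) : ℝ) with hl
      set n := ‖P₀ h₀‖ ^ 2 with hn
      have hn0 : 0 ≤ n := sq_nonneg _
      have hk := key (-(l / (n + 1)))
      have hn1 : (0:ℝ) < n + 1 := by linarith
      have hl2 : l ^ 2 ≤ 0 := by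
        have := mul_pos hn1 hn1
        field_simp at hk
        nlinarith [hk, hn0, sq_nonneg l, mul_pos hn1 (show (0:ℝ) < n + 2 by linarith)]
      have : l ^ 2 = 0 := le_antisymm hl2 (sq_nonneg _)
      exact pow_eq_zero_iff two_ne_zero |>.mp this
    refine iSup₂_le fun p hp => ?_
    obtain ⟨hp0, hp1, hpΛ0, hpΛ1⟩ := hp
    obtain ⟨a, ha⟩ : ∃ a, a = p.1 - f₀τ := ⟨_, rfl⟩
    have hamem : a ∈ LinearMap.ker Λ₀ := by
      rw [LinearMap.mem_ker, ha, map_sub, hpΛ0, hf₀τ, sub_self]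
    obtain ⟨a', ha', hPa⟩ := haux a hamem
    have hpa : p.1 = f₀τ + a := by rw [ha]; abel
    obtain ⟨q, hq1d, hq2d⟩ :
        ∃ q : F × F, q.1 = f₀τ - a ∧ q.2 = p.2 - (2 : ℝ) • a' :=
      ⟨(f₀τ - a, p.2 - (2 : ℝ) • a'), rfl, rfl⟩
    have h0 := horth a hamem
    have hqmem : q ∈ {p : F × F | ‖P₀ p.1‖ ≤ ε₀ ∧ ‖P₁ (p.1 - p.2)‖ ≤ ε₁ ∧
        Λ₀ p.1 = y₀ ∧ Λ₁ p.2 = y₁} := by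
      rw [Set.mem_setOf_eq, hq1d, hq2d]
      refine ⟨?_, ?_, ?_, ?_⟩
      · have e1 : ‖P₀ (f₀τ - a)‖ ^ 2 = ‖P₀ (f₀τ + a)‖ ^ 2 := by
          rw [map_sub, map_add, norm_sub_sq_real, norm_add_sq_real, h0]; ring
        rw [← hpa] at e1
        have := norm_nonneg (P₀ (f₀τ - a))
        have := norm_nonneg (P₀ p.1)
        nlinarith [hp0, e1]
      · have e : f₀τ - a - (p.2 - (2 : ℝ) • a') =
            (p.1 - p.2) - (2 : ℝ) • (a - a') := by
          rw [hpa]; module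
        rw [e, map_sub, map_smul, hPa, smul_zero, sub_zero]
        exact hp1
      · rw [map_sub, hf₀τ, LinearMap.mem_ker.mp hamem, sub_zero]
      · rw [map_sub, map_smul, ha', smul_zero, sub_zero, hpΛ1]
    -- midpoint argument
    have hq1 : Q q.1 = Q f₀τ - Q a := by
      rw [hq1d, map_sub]
    have hp1' : Q p.1 = Q f₀τ + Q a := by rw [hpa, map_add]
    have hdiff : (Q p.1 - z) - (Q q.1 - z) = (2 : ℝ) • (Q p.1 - Q f₀τ) := by
      rw [hp1', hq1]; module
    have hnorm2 : ‖(Q p.1 - z) - (Q q.1 - z)‖ = 2 * ‖Q p.1 - Q f₀τ‖ := by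
      rw [hdiff, norm_smul]
      simp
    have htri : 2 * ‖Q p.1 - Q f₀τ‖ ≤ ‖Q p.1 - z‖ + ‖Q q.1 - z‖ := by
      rw [← hnorm2]; exact norm_sub_le _ _
    rcases le_total ‖Q p.1 - z‖ ‖Q q.1 - z‖ with hle | hle
    · have hb' : ‖Q p.1 - Q f₀τ‖ ≤ ‖Q q.1 - z‖ := by linarith
      exact le_trans (ENNReal.ofReal_le_ofReal hb')
        (le_iSup₂_of_le q hqmem le_rfl)
    · have hb' : ‖Q p.1 - Q f₀τ‖ ≤ ‖Q p.1 - z‖ := by linarith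
      exact le_trans (ENNReal.ofReal_le_ofReal hb')
        (le_iSup₂_of_le p ⟨hp0, hp1, hpΛ0, hpΛ1⟩ le_rfl)
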